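/- Any measure M on objects (ρ,H) that is additive and monotone under marginal-catalytic free transitions satisfies super-additivity of the induced function on states: the swap channel between the system (ρ₁₂, H₁+H₂) and a catalyst prepared in (ρ₁⊗ρ₂, H₁+H₂) is Gibbs-preserving, realizes the transition (ρ₁₂, H₁+H₂) → (ρ₁⊗ρ₂, H₁+H₂) with the catalyst's marginals unchanged, and hence M(ρ₁₂, H₁+H₂) ≥ M(ρ₁⊗ρ₂, H₁+H₂). -/

import Mathlib

open Matrix
open scoped Kronecker ComplexOrder

noncomputable section

/-- Matrix logarithm via spectral decomposition (0 for non-Hermitian input). -/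
def mlog {d : Type*} [Fintype d] [DecidableEq d] (A : Matrix d d ℂ) : Matrix d d ℂ :=
  if h : A.IsHermitian then
    (h.eigenvectorUnitary : Matrix d d ℂ) *
      Matrix.diagonal (fun i => (Real.log (h.eigenvalues i) : ℂ)) *
      (star (h.eigenvectorUnitary : Matrix d d ℂ))
  else 0

/-- Quantum relative entropy S(ρ‖σ) = Tr(ρ log ρ − ρ log σ). -/
def relEnt {d : Type*} [Fintype d] [DecidableEq d] (ρ σ : Matrix d d ℂ) : ℝ :=
  (Matrix.trace (ρ * mlog ρ - ρ * mlog σ)).re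

/-- Von Neumann entropy S(ρ) = −Tr(ρ log ρ). -/
def vnEnt {d : Type*} [Fintype d] [DecidableEq d] (ρ : Matrix d d ℂ) : ℝ :=
  -(Matrix.trace (ρ * mlog ρ)).re

/-- ρ is a density operator. -/
def IsDensity {d : Type*} [Fintype d] (ρ : Matrix d d ℂ) : Prop :=
  ρ.PosSemidef ∧ ρ.trace = 1

/-- Full-rank density operator. -/
def IsFaithfulState {d : Type*} [Fintype d] (σ : Matrix d d ℂ) : Prop :=
  σ.PosDef ∧ σ.trace = 1

/-- Apply a linear map blockwise (i.e. (id_k ⊗ T)). -/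
def blockApply {d e : Type*} [Fintype d] [DecidableEq d] [Fintype e] [DecidableEq e]
    (T : Matrix d d ℂ →ₗ[ℂ] Matrix e e ℂ) {k : Type*}
    (M : Matrix (k × d) (k × d) ℂ) : Matrix (k × e) (k × e) ℂ :=
  Matrix.of fun p q => T (Matrix.of fun i j => M (p.1, i) (q.1, j)) p.2 q.2

/-- Quantum channel: trace preserving and completely positive. -/
def IsQChannel {d e : Type*} [Fintype d] [DecidableEq d] [Fintype e] [DecidableEq e]
    (T : Matrix d d ℂ →ₗ[ℂ] Matrix e e ℂ) : Prop :=
  (∀ M : Matrix d d ℂ, (T M).trace = M.trace) ∧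
  (∀ (k : Type) [Fintype k] [DecidableEq k] (M : Matrix (k × d) (k × d) ℂ),
      M.PosSemidef → (blockApply T M).PosSemidef)

/-- Gibbs state ω_{β,H} = e^{−βH}/Tr e^{−βH}. -/
def gibbs {d : Type*} [Fintype d] [DecidableEq d] (β : ℝ) (H : Matrix d d ℂ) :
    Matrix d d ℂ :=
  (Matrix.trace (NormedSpace.exp ((-β : ℂ) • H)))⁻¹ • NormedSpace.exp ((-β : ℂ) • H)

/-- Non-equilibrium free energy difference ΔF_β(ρ,H) = (1/β) S(ρ‖ω_{β,H}). -/
def dF {d : Type*} [Fintype d] [DecidableEq d] (β : ℝ) (ρ H : Matrix d d ℂ) : ℝ :=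
  (1 / β) * relEnt ρ (gibbs β H)

/-- Partial trace over the second factor. -/
def ptraceRight {d₁ d₂ : Type*} [Fintype d₂]
    (M : Matrix (d₁ × d₂) (d₁ × d₂) ℂ) : Matrix d₁ d₁ ℂ :=
  Matrix.of fun i j => ∑ k, M (i, k) (j, k)

/-- Partial trace over the first factor. -/
def ptraceLeft {d₁ d₂ : Type*} [Fintype d₁]
    (M : Matrix (d₁ × d₂) (d₁ × d₂) ℂ) : Matrix d₂ d₂ ℂ :=
  Matrix.of fun i j => ∑ k, M (k, i) (k, j)

/-- n-fold tensor power of a matrix. -/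
def tpow {d : Type*} [Fintype d] (ρ : Matrix d d ℂ) (n : ℕ) :
    Matrix (Fin n → d) (Fin n → d) ℂ :=
  Matrix.of fun a b => ∏ i, ρ (a i) (b i)

/-- Tensor product of a finite family of matrices. -/
def tprodFam {k : ℕ} {c : Type*} [Fintype c] (γ : Fin k → Matrix c c ℂ) :
    Matrix (Fin k → c) (Fin k → c) ℂ :=
  Matrix.of fun a b => ∏ i, γ i (a i) (b i)

/-- Single-site marginal at site i of a state on an n-fold tensor product. -/
def marginal {d : Type*} [Fintype d] [DecidableEq d] {n : ℕ}
    (M : Matrix (Fin n → d) (Fin n → d) ℂ) (i : Fin n) : Matrix d d ℂ :=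
  Matrix.of fun a b => ∑ g : {j : Fin n // j ≠ i} → d,
    M (fun j => if h : j = i then a else g ⟨j, h⟩)
      (fun j => if h : j = i then b else g ⟨j, h⟩)

/-- Trace norm of a matrix: sum of singular values. -/
def traceNorm {d : Type*} [Fintype d] [DecidableEq d] (A : Matrix d d ℂ) : ℝ :=
  ∑ i, Real.sqrt ((Matrix.posSemidef_conjTranspose_mul_self A).1.eigenvalues i)



/-! ### Auxiliary lemmas for the main theorem -/

section Aux

/-- `A ↦ A ⊗ₖ 1` as an algebra homomorphism. -/
def kronLeftAlg (d e : Type) [Fintype d] [DecidableEq d] [Fintype e] [DecidableEq e] :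
    Matrix d d ℂ →ₐ[ℂ] Matrix (d × e) (d × e) ℂ where
  toFun A := A ⊗ₖ (1 : Matrix e e ℂ)
  map_one' := Matrix.one_kronecker_one
  map_mul' A B := by rw [← Matrix.mul_kronecker_mul, one_mul]
  map_zero' := Matrix.zero_kronecker _
  map_add' A B := Matrix.add_kronecker A B 1
  commutes' c := by
    simp only [Matrix.algebraMap_eq_diagonal]
    ext ⟨a, b⟩ ⟨a', b'⟩
    simp [Matrix.kroneckerMap_apply, Matrix.diagonal_apply, Matrix.one_apply, Prod.ext_iff]
    aesop

/-- `B ↦ 1 ⊗ₖ B` as an algebra homomorphism. -/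
def kronRightAlg (d e : Type) [Fintype d] [DecidableEq d] [Fintype e] [DecidableEq e] :
    Matrix e e ℂ →ₐ[ℂ] Matrix (d × e) (d × e) ℂ where
  toFun B := (1 : Matrix d d ℂ) ⊗ₖ B
  map_one' := Matrix.one_kronecker_one
  map_mul' A B := by rw [← Matrix.mul_kronecker_mul, one_mul]
  map_zero' := Matrix.kronecker_zero _
  map_add' A B := Matrix.kronecker_add 1 A B
  commutes' c := by
    simp only [Matrix.algebraMap_eq_diagonal]
    ext ⟨a, b⟩ ⟨a', b'⟩
    simp [Matrix.kroneckerMap_apply, Matrix.diagonal_apply, Matrix.one_apply, Prod.ext_iff]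
    aesop

lemma exp_kron_left (d e : Type) [Fintype d] [DecidableEq d] [Fintype e] [DecidableEq e]
    (A : Matrix d d ℂ) :
    NormedSpace.exp (A ⊗ₖ (1 : Matrix e e ℂ)) = NormedSpace.exp A ⊗ₖ (1 : Matrix e e ℂ) := by
  letI : SeminormedRing (Matrix d d ℂ) := Matrix.linftyOpSemiNormedRing
  letI : NormedRing (Matrix d d ℂ) := Matrix.linftyOpNormedRing
  letI : NormedAlgebra ℂ (Matrix d d ℂ) := Matrix.linftyOpNormedAlgebra
  letI : NormedAlgebra ℚ (Matrix d d ℂ) := Matrix.linftyOpNormedAlgebra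
  letI : SeminormedRing (Matrix (d × e) (d × e) ℂ) := Matrix.linftyOpSemiNormedRing
  letI : NormedRing (Matrix (d × e) (d × e) ℂ) := Matrix.linftyOpNormedRing
  letI : NormedAlgebra ℂ (Matrix (d × e) (d × e) ℂ) := Matrix.linftyOpNormedAlgebra
  have hc : Continuous (kronLeftAlg d e) :=
    (kronLeftAlg d e).toLinearMap.continuous_of_finiteDimensional
  exact (NormedSpace.map_exp (kronLeftAlg d e) hc A).symm

lemma exp_kron_right (d e : Type) [Fintype d] [DecidableEq d] [Fintype e] [DecidableEq e]
    (B : Matrix e e ℂ) :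
    NormedSpace.exp ((1 : Matrix d d ℂ) ⊗ₖ B) = (1 : Matrix d d ℂ) ⊗ₖ NormedSpace.exp B := by
  letI : SeminormedRing (Matrix e e ℂ) := Matrix.linftyOpSemiNormedRing
  letI : NormedRing (Matrix e e ℂ) := Matrix.linftyOpNormedRing
  letI : NormedAlgebra ℂ (Matrix e e ℂ) := Matrix.linftyOpNormedAlgebra
  letI : NormedAlgebra ℚ (Matrix e e ℂ) := Matrix.linftyOpNormedAlgebra
  letI : SeminormedRing (Matrix (d × e) (d × e) ℂ) := Matrix.linftyOpSemiNormedRing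
  letI : NormedRing (Matrix (d × e) (d × e) ℂ) := Matrix.linftyOpNormedRing
  letI : NormedAlgebra ℂ (Matrix (d × e) (d × e) ℂ) := Matrix.linftyOpNormedAlgebra
  have hc : Continuous (kronRightAlg d e) :=
    (kronRightAlg d e).toLinearMap.continuous_of_finiteDimensional
  exact (NormedSpace.map_exp (kronRightAlg d e) hc B).symm

/-- The Gibbs state of a non-interacting sum Hamiltonian factorizes. -/
lemma gibbs_kron (β : ℝ) (d e : Type) [Fintype d] [DecidableEq d] [Fintype e] [DecidableEq e]
    (H₁ : Matrix d d ℂ) (H₂ : Matrix e e ℂ) :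
    gibbs β (H₁ ⊗ₖ (1 : Matrix e e ℂ) + (1 : Matrix d d ℂ) ⊗ₖ H₂) =
      gibbs β H₁ ⊗ₖ gibbs β H₂ := by
  have hsmul : (-β : ℂ) • (H₁ ⊗ₖ (1 : Matrix e e ℂ) + (1 : Matrix d d ℂ) ⊗ₖ H₂) =
      ((-β : ℂ) • H₁) ⊗ₖ (1 : Matrix e e ℂ) + (1 : Matrix d d ℂ) ⊗ₖ ((-β : ℂ) • H₂) := by
    rw [smul_add, Matrix.smul_kronecker, Matrix.kronecker_smul]
  have hcomm : Commute (((-β : ℂ) • H₁) ⊗ₖ (1 : Matrix e e ℂ))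
      ((1 : Matrix d d ℂ) ⊗ₖ ((-β : ℂ) • H₂)) := by
    unfold Commute SemiconjBy
    rw [← Matrix.mul_kronecker_mul, ← Matrix.mul_kronecker_mul, one_mul, mul_one, one_mul, mul_one]
  have hexp : NormedSpace.exp
        ((-β : ℂ) • (H₁ ⊗ₖ (1 : Matrix e e ℂ) + (1 : Matrix d d ℂ) ⊗ₖ H₂)) =
      NormedSpace.exp ((-β : ℂ) • H₁) ⊗ₖ NormedSpace.exp ((-β : ℂ) • H₂) := by
    rw [hsmul, Matrix.exp_add_of_commute _ _ hcomm, exp_kron_left, exp_kron_right,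
      ← Matrix.mul_kronecker_mul, mul_one, one_mul]
  unfold gibbs
  rw [hexp, Matrix.trace_kronecker, mul_inv, Matrix.smul_kronecker, Matrix.kronecker_smul,
    smul_smul]

/-- Swap linear map on a doubled space. -/
def swapLM (X : Type) [Fintype X] [DecidableEq X] :
    Matrix (X × X) (X × X) ℂ →ₗ[ℂ] Matrix (X × X) (X × X) ℂ :=
  (Matrix.reindexLinearEquiv ℂ ℂ (Equiv.prodComm X X) (Equiv.prodComm X X)).toLinearMap

lemma swapLM_apply (X : Type) [Fintype X] [DecidableEq X]
    (M : Matrix (X × X) (X × X) ℂ) (p q : X × X) :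
    swapLM X M p q = M (p.2, p.1) (q.2, q.1) := rfl

lemma swapLM_kron (X : Type) [Fintype X] [DecidableEq X] (A B : Matrix X X ℂ) :
    swapLM X (A ⊗ₖ B) = B ⊗ₖ A := by
  ext ⟨u, v⟩ ⟨u', v'⟩
  simp [swapLM_apply, Matrix.kroneckerMap_apply, mul_comm]

lemma blockApply_swap (X : Type) [Fintype X] [DecidableEq X] (k : Type) [Fintype k]
    [DecidableEq k] (M : Matrix (k × (X × X)) (k × (X × X)) ℂ) :
    blockApply (swapLM X) M =
      M.submatrix (fun p : k × (X × X) => (p.1, (p.2.2, p.2.1)))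
        (fun p : k × (X × X) => (p.1, (p.2.2, p.2.1))) := by
  ext ⟨a, b⟩ ⟨c, d⟩
  rfl

lemma swapLM_trace (X : Type) [Fintype X] [DecidableEq X]
    (M : Matrix (X × X) (X × X) ℂ) : (swapLM X M).trace = M.trace := by
  unfold Matrix.trace Matrix.diag
  rw [← Equiv.sum_comp (Equiv.prodComm X X)]
  rfl

lemma swapLM_isQChannel (X : Type) [Fintype X] [DecidableEq X] :
    IsQChannel (swapLM X) := by
  constructor
  · intro M; exact swapLM_trace X M
  · intro k _ _ M hM
    rw [blockApply_swap]
    exact hM.submatrix _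

lemma psd_zero {n : Type*} [Fintype n] : (0 : Matrix n n ℂ).PosSemidef := by
  constructor
  · simp [Matrix.IsHermitian]
  · intro x; simp

lemma psd_add {n : Type*} [Fintype n] {A B : Matrix n n ℂ}
    (hA : A.PosSemidef) (hB : B.PosSemidef) : (A + B).PosSemidef := by
  refine ⟨hA.1.add hB.1, fun x => ?_⟩
  simpa [mul_add, add_mul] using add_nonneg (hA.2 x) (hB.2 x)

lemma psd_sum {n ι : Type*} [Fintype n] (s : Finset ι) (f : ι → Matrix n n ℂ)
    (h : ∀ i ∈ s, (f i).PosSemidef) : (∑ i ∈ s, f i).PosSemidef := by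
  classical
  induction s using Finset.induction_on with
  | empty => simpa using psd_zero
  | insert a s hx ih =>
    rw [Finset.sum_insert hx]
    exact psd_add (h _ (Finset.mem_insert_self _ _))
      (ih fun i hi => h i (Finset.mem_insert_of_mem hi))

lemma ptraceRight_isDensity {d₁ d₂ : Type*} [Fintype d₁] [Fintype d₂]
    {M : Matrix (d₁ × d₂) (d₁ × d₂) ℂ} (hM : IsDensity M) :
    IsDensity (ptraceRight M) := by
  constructor
  · have : ptraceRight M = ∑ k, M.submatrix (fun i => (i, k)) (fun j => (j, k)) := by
      ext i j; simp [ptraceRight, Matrix.sum_apply]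
    rw [this]
    exact psd_sum _ _ fun k _ => hM.1.submatrix _
  · rw [show (ptraceRight M).trace = M.trace by
      simp [Matrix.trace, ptraceRight, Matrix.diag, Fintype.sum_prod_type]]
    exact hM.2

lemma ptraceLeft_isDensity {d₁ d₂ : Type*} [Fintype d₁] [Fintype d₂]
    {M : Matrix (d₁ × d₂) (d₁ × d₂) ℂ} (hM : IsDensity M) :
    IsDensity (ptraceLeft M) := by
  constructor
  · have : ptraceLeft M = ∑ k, M.submatrix (fun i => (k, i)) (fun j => (k, j)) := by
      ext i j; simp [ptraceLeft, Matrix.sum_apply]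
    rw [this]
    exact psd_sum _ _ fun k _ => hM.1.submatrix _
  · rw [show (ptraceLeft M).trace = M.trace by
      unfold Matrix.trace Matrix.diag ptraceLeft
      rw [Fintype.sum_prod_type]
      exact Finset.sum_comm]
    exact hM.2

/-- Kronecker product of Hermitian matrices is Hermitian. -/
lemma kron_isHermitian {d e : Type*} [Fintype d] [Fintype e]
    {A : Matrix d d ℂ} {B : Matrix e e ℂ}
    (hA : A.IsHermitian) (hB : B.IsHermitian) : (A ⊗ₖ B).IsHermitian := by
  ext ⟨a, b⟩ ⟨a', b'⟩
  simp only [Matrix.conjTranspose_apply, Matrix.kroneckerMap_apply, star_mul']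
  rw [mul_comm, ← Matrix.conjTranspose_apply, ← Matrix.conjTranspose_apply, hA, hB, mul_comm]

end Aux

theorem marginal_catalytic_implies_superadditive
    (β : ℝ) (hβ : 0 < β)
    (M : ∀ (d : Type) [Fintype d] [DecidableEq d], Matrix d d ℂ → Matrix d d ℂ → ℝ)
    (hadd : ∀ (d₁ d₂ : Type) [Fintype d₁] [DecidableEq d₁] [Fintype d₂] [DecidableEq d₂]
        (ρ₁ H₁ : Matrix d₁ d₁ ℂ) (ρ₂ H₂ : Matrix d₂ d₂ ℂ),
        M (d₁ × d₂) (ρ₁ ⊗ₖ ρ₂) (H₁ ⊗ₖ (1 : Matrix d₂ d₂ ℂ) + (1 : Matrix d₁ d₁ ℂ) ⊗ₖ H₂) =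
          M d₁ ρ₁ H₁ + M d₂ ρ₂ H₂)
    (hmono : ∀ (dS dS' c₁ c₂ : Type) [Fintype dS] [DecidableEq dS]
        [Fintype dS'] [DecidableEq dS'] [Fintype c₁] [DecidableEq c₁]
        [Fintype c₂] [DecidableEq c₂]
        (G : Matrix (dS × (c₁ × c₂)) (dS × (c₁ × c₂)) ℂ →ₗ[ℂ]
             Matrix (dS' × (c₁ × c₂)) (dS' × (c₁ × c₂)) ℂ),
        IsQChannel G →
        ∀ (H : Matrix dS dS ℂ) (K : Matrix dS' dS' ℂ)
          (R₁ : Matrix c₁ c₁ ℂ) (R₂ : Matrix c₂ c₂ ℂ),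
        H.IsHermitian → K.IsHermitian → R₁.IsHermitian → R₂.IsHermitian →
        G (gibbs β H ⊗ₖ (gibbs β R₁ ⊗ₖ gibbs β R₂)) =
          gibbs β K ⊗ₖ (gibbs β R₁ ⊗ₖ gibbs β R₂) →
        ∀ (ρ : Matrix dS dS ℂ) (σ : Matrix dS' dS' ℂ)
          (γ₁ : Matrix c₁ c₁ ℂ) (γ₂ : Matrix c₂ c₂ ℂ)
          (γt : Matrix (c₁ × c₂) (c₁ × c₂) ℂ),
        IsDensity ρ → IsDensity γ₁ → IsDensity γ₂ →
        G (ρ ⊗ₖ (γ₁ ⊗ₖ γ₂)) = σ ⊗ₖ γt →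
        ptraceRight γt = γ₁ → ptraceLeft γt = γ₂ →
        M dS' σ K ≤ M dS ρ H)
    (d₁ d₂ : Type) [Fintype d₁] [DecidableEq d₁] [Fintype d₂] [DecidableEq d₂]
    (ρ₁₂ : Matrix (d₁ × d₂) (d₁ × d₂) ℂ) (hρ₁₂ : IsDensity ρ₁₂)
    (H₁ : Matrix d₁ d₁ ℂ) (H₂ : Matrix d₂ d₂ ℂ)
    (hH₁ : H₁.IsHermitian) (hH₂ : H₂.IsHermitian) :
    M (d₁ × d₂) (ptraceRight ρ₁₂ ⊗ₖ ptraceLeft ρ₁₂)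
        (H₁ ⊗ₖ (1 : Matrix d₂ d₂ ℂ) + (1 : Matrix d₁ d₁ ℂ) ⊗ₖ H₂) ≤
      M (d₁ × d₂) ρ₁₂
        (H₁ ⊗ₖ (1 : Matrix d₂ d₂ ℂ) + (1 : Matrix d₁ d₁ ℂ) ⊗ₖ H₂) := by
  classical
  set Hsum : Matrix (d₁ × d₂) (d₁ × d₂) ℂ :=
    H₁ ⊗ₖ (1 : Matrix d₂ d₂ ℂ) + (1 : Matrix d₁ d₁ ℂ) ⊗ₖ H₂ with hHsum
  have hHsumHerm : Hsum.IsHermitian :=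
    (kron_isHermitian hH₁ Matrix.isHermitian_one).add
      (kron_isHermitian Matrix.isHermitian_one hH₂)
  have hγ₁ : IsDensity (ptraceRight ρ₁₂) := ptraceRight_isDensity hρ₁₂
  have hγ₂ : IsDensity (ptraceLeft ρ₁₂) := ptraceLeft_isDensity hρ₁₂
  have hgibbs : gibbs β Hsum = gibbs β H₁ ⊗ₖ gibbs β H₂ := gibbs_kron β d₁ d₂ H₁ H₂
  refine hmono (d₁ × d₂) (d₁ × d₂) d₁ d₂ (swapLM (d₁ × d₂))
    (swapLM_isQChannel (d₁ × d₂)) Hsum Hsum H₁ H₂ hHsumHerm hHsumHerm hH₁ hH₂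
    ?_ ρ₁₂ (ptraceRight ρ₁₂ ⊗ₖ ptraceLeft ρ₁₂) (ptraceRight ρ₁₂) (ptraceLeft ρ₁₂) ρ₁₂
    hρ₁₂ hγ₁ hγ₂ ?_ rfl rfl
  · rw [hgibbs, swapLM_kron]
  · rw [swapLM_kron]


end
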